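/- Let S be a finite singleton-rich semigroup with principal series S = S₁ ⊋ S₂ ⊋ ⋯ ⊋ S_l ⊋ S_{l+1} = ∅. If a principal factor Sᵢ/S_{i+1} is not null, then it is an inverse completely 0-simple semigroup or a group; in particular it is isomorphic to a Brandt semigroup ℬₙ(G) over a finite group G. -/
import Mathlib


open scoped Classical

/-- φ*(s): the idempotent right identities of `s`. -/
def rIds {S : Type*} [Mul S] (s : S) : Set S := {e | e * e = e ∧ s * e = s}

/-- φ⁺(s): the idempotent left identities of `s`. -/
def lIds {S : Type*} [Mul S] (s : S) : Set S := {e | e * e = e ∧ e * s = s}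

/-- `x` is the (necessarily unique) element of a singleton kernel (minimal ideal) of the
subsemigroup `T`: `{x}` is an ideal of `T`, hence the minimal ideal of `T`. -/
def IsKer {S : Type*} [Semigroup S] (T : Subsemigroup S) (x : S) : Prop :=
  x ∈ T ∧ ∀ a ∈ T, a * x = x ∧ x * a = x

/-- The natural partial order on idempotents: `e ≤ f` iff `ef = fe = e`. -/
def nle {S : Type*} [Mul S] (e f : S) : Prop := e * f = e ∧ f * e = e

/-- The relation `≪`: `s ≪ t` iff `s = s⁺ t s*`, where `sa s = s*` and `pl s = s⁺`. -/
def ll {S : Type*} [Mul S] (sa pl : S → S) (s t : S) : Prop := s = pl s * t * sa s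

/-- `I` is a (two-sided) ideal of `S` (the empty set is allowed, for convenience). -/
def IsIdealSet {S : Type*} [Mul S] (I : Set S) : Prop :=
  ∀ a : S, ∀ b ∈ I, a * b ∈ I ∧ b * a ∈ I

/-- Multiplication of the Brandt semigroup `ℬₙ(G)`: nonzero elements are triples `(i,g,j)`,
`none` is the zero, and `(i,g,j)(k,h,l) = (i,gh,l)` if `j = k`, else `0`. -/
def brandtMul {G : Type*} [Mul G] {n : ℕ} :
    Option (Fin n × G × Fin n) → Option (Fin n × G × Fin n) → Option (Fin n × G × Fin n)
  | some (i, g, j), some (k, h, l) => if j = k then some (i, g * h, l) else none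
  | _, _ => none

/-- Multiplication of the principal (Rees) factor `A/B`: elements are `A \ B` together with
a zero (`none`); the product of two nonzero elements is their product in `S` if it stays in
`A \ B`, and `0` otherwise. -/
noncomputable def facMul {S : Type*} [Mul S] (A B : Set S) :
    Option {x : S // x ∈ A \ B} → Option {x : S // x ∈ A \ B} → Option {x : S // x ∈ A \ B}
  | some a, some b =>
      if h : (a.1 * b.1) ∈ A \ B then some ⟨a.1 * b.1, h⟩ else none
  | _, _ => none

namespace SR

/-- Plain carrier for the group, to avoid instance clashes on `Fin`. -/
def GCarrier (m : ℕ) : Type := Fin m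

variable {S : Type*} [Semigroup S]

variable {S : Type*} [Semigroup S]

/-- `sp v n = v^(n+1)`. -/
def sp (v : S) : ℕ → S
  | 0 => v
  | n+1 => sp v n * v

lemma sp_succ (v : S) (n : ℕ) : sp v (n+1) = sp v n * v := rfl

lemma sp_succ' (v : S) (n : ℕ) : sp v (n+1) = v * sp v n := by
  induction n with
  | zero => rfl
  | succ n ih => rw [sp_succ, ih, mul_assoc, ← sp_succ, ih]

lemma sp_add (v : S) (m n : ℕ) : sp v (m + n + 1) = sp v m * sp v n := by
  induction n with
  | zero => rfl
  | succ n ih => rw [show m + (n+1) + 1 = (m + n + 1) + 1 by omega, sp_succ, ih, sp_succ,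
      mul_assoc]

lemma exists_sp_idem [Finite S] (v : S) : ∃ n, sp v n * sp v n = sp v n := by
  obtain ⟨x, y, hxy, h⟩ := Finite.exists_ne_map_eq_of_infinite (fun n : ℕ => sp v n)
  -- wlog x < y
  obtain ⟨a, d, hd, hkey⟩ : ∃ a d : ℕ, 0 < d ∧ sp v (a + d) = sp v a := by
    rcases Nat.lt_or_ge x y with hlt | hge
    · exact ⟨x, y - x, by omega, by rw [show x + (y-x) = y by omega]; exact h.symm⟩
    · exact ⟨y, x - y, by omega, by rw [show y + (x-y) = x by omega]; exact h⟩
  have key : ∀ j, sp v (a + j + d) = sp v (a + j) := by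
    intro j; induction j with
    | zero => simpa using hkey
    | succ j ih => rw [show a + (j+1) + d = (a + j + d) + 1 by omega, sp_succ, ih, ← sp_succ,
        show a + j + 1 = a + (j+1) by omega]
  have gen : ∀ m, a ≤ m → ∀ k, sp v (m + k * d) = sp v m := by
    intro m hm k; induction k with
    | zero => simp
    | succ k ih =>
      rw [Nat.succ_mul, show m + (k*d + d) = a + (m + k*d - a) + d by omega, key,
        show a + (m + k*d - a) = m + k*d by omega, ih]
  set c := (a+1) * d with hc
  have hc1 : a + 1 ≤ c := Nat.le_mul_of_pos_right _ hd
  refine ⟨c - 1, ?_⟩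
  rw [← sp_add, show (c-1) + (c-1) + 1 = (c-1) + (a+1)*d by omega]
  exact gen _ (by omega) _

lemma sp_right_id {x v : S} (h : x * v = x) (n : ℕ) : x * sp v n = x := by
  induction n with
  | zero => exact h
  | succ n ih => rw [sp_succ, ← mul_assoc, ih, h]

lemma sp_left_id {x v : S} (h : v * x = x) (n : ℕ) : sp v n * x = x := by
  induction n with
  | zero => exact h
  | succ n ih => rw [sp_succ', mul_assoc, ih, h]

lemma sp_left_absorb {p v : S} (h : p * v = v) (n : ℕ) : p * sp v n = sp v n := by
  induction n with
  | zero => exact h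
  | succ n ih => rw [sp_succ, ← mul_assoc, ih]

lemma sp_eq_mul_left (k t : S) (n : ℕ) : ∃ c, sp (k * t) n = k * c := by
  induction n with
  | zero => exact ⟨t, rfl⟩
  | succ n ih => obtain ⟨c, hc⟩ := ih; exact ⟨c * (k * t), by rw [sp_succ, hc, mul_assoc]⟩

lemma sp_eq_mul_right (x a : S) (n : ℕ) : ∃ c, sp (x * a) n = c * a := by
  induction n with
  | zero => exact ⟨x, rfl⟩
  | succ n ih => obtain ⟨c, hc⟩ := ih; exact ⟨c * a * x, by rw [sp_succ, hc]; simp only [mul_assoc]⟩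

lemma sp_sandwich {x p q : S} (h : x = p * x * q) (n : ℕ) : x = sp p n * x * sp q n := by
  induction n with
  | zero => exact h
  | succ n ih =>
    rw [sp_succ', sp_succ]
    calc x = p * x * q := h
    _ = p * (sp p n * x * sp q n) * q := by rw [← ih]
    _ = p * sp p n * x * (sp q n * q) := by simp only [mul_assoc]


structure Ctx (S : Type*) [Semigroup S] where
  sa : S → S
  pl : S → S
  hsa : ∀ s : S, IsKer (Subsemigroup.closure (rIds s)) (sa s)
  hpl : ∀ s : S, IsKer (Subsemigroup.closure (lIds s)) (pl s)
  A : Set S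
  B : Set S
  hA : IsIdealSet A
  hB : IsIdealSet B
  hBA : B ⊆ A
  hMx : ∀ I : Set S, IsIdealSet I → B ⊆ I → I ⊆ A → I = B ∨ I = A
  hNN : ∃ x ∈ A \ B, ∃ y ∈ A \ B, x * y ∉ B

namespace Ctx
variable {S : Type*} [Semigroup S] (c : Ctx S)

/-- x absorbs the closure of its idempotent right identities. -/
lemma mul_of_mem_closure_rIds {x t : S} (ht : t ∈ Subsemigroup.closure (rIds x)) :
    x * t = x := by
  induction ht using Subsemigroup.closure_induction with
  | mem e he => exact he.2
  | mul a b _ _ ha hb => rw [← mul_assoc, ha, hb]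

lemma mul_of_mem_closure_lIds {x t : S} (ht : t ∈ Subsemigroup.closure (lIds x)) :
    t * x = x := by
  induction ht using Subsemigroup.closure_induction with
  | mem e he => exact he.2
  | mul a b _ _ ha hb => rw [mul_assoc, hb, ha]

lemma mul_sa (x : S) : x * c.sa x = x := mul_of_mem_closure_rIds (c.hsa x).1
lemma pl_mul (x : S) : c.pl x * x = x := mul_of_mem_closure_lIds (c.hpl x).1

lemma sa_idem (x : S) : c.sa x * c.sa x = c.sa x := ((c.hsa x).2 _ (c.hsa x).1).1
lemma pl_idem (x : S) : c.pl x * c.pl x = c.pl x := ((c.hpl x).2 _ (c.hpl x).1).1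

lemma sa_absorb {x e : S} (he : e * e = e) (hxe : x * e = x) :
    e * c.sa x = c.sa x ∧ c.sa x * e = c.sa x :=
  (c.hsa x).2 e (Subsemigroup.subset_closure ⟨he, hxe⟩)

lemma pl_absorb {x e : S} (he : e * e = e) (hex : e * x = x) :
    e * c.pl x = c.pl x ∧ c.pl x * e = c.pl x :=
  (c.hpl x).2 e (Subsemigroup.subset_closure ⟨he, hex⟩)

lemma sa_of_idem {e : S} (he : e * e = e) : c.sa e = e := by
  have h1 := (c.sa_absorb he he).1
  have h2 := c.mul_sa e
  rw [h2] at h1; exact h1.symm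

lemma pl_of_idem {e : S} (he : e * e = e) : c.pl e = e := by
  have h1 := (c.pl_absorb he he).2
  have h2 := c.pl_mul e
  rw [h2] at h1; exact h1.symm

/-- The key "Law": for idempotents, `u*v = v → v*u = v`. -/
lemma law₁ (c : Ctx S) {u v : S} (hu : u * u = u) (hv : v * v = v) (h : u * v = v) : v * u = v := by
  have := (c.pl_absorb (x := v) hu h).2
  rwa [c.pl_of_idem hv] at this

lemma law₂ (c : Ctx S) {u v : S} (hu : u * u = u) (hv : v * v = v) (h : u * v = u) : v * u = u := by
  have := (c.sa_absorb (x := u) hv h).1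
  rwa [c.sa_of_idem hu] at this

lemma spA {v : S} (hv : v ∈ c.A) (n : ℕ) : sp v n ∈ c.A := by
  induction n with
  | zero => exact hv
  | succ n ih => exact (c.hA v _ ih).2


lemma mulA {a b : S} (ha : a ∈ c.A) : ∀ s, s * a ∈ c.A ∧ a * s ∈ c.A := fun s => c.hA s a ha
lemma mulB {a : S} (ha : a ∈ c.B) : ∀ s, s * a ∈ c.B ∧ a * s ∈ c.B := fun s => c.hB s a ha

/-- L3: every nonzero element of the factor decomposes as a product of two nonzero elements. -/
lemma decomp2 {y : S} (hy : y ∈ c.A \ c.B) :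
    ∃ a ∈ c.A \ c.B, ∃ b ∈ c.A \ c.B, y = a * b := by
  set I : Set S := c.B ∪ {z | ∃ a ∈ c.A, ∃ b ∈ c.A, z = a * b} with hI
  have hIdeal : IsIdealSet I := by
    rintro s z (hz | ⟨a, ha, b, hb, rfl⟩)
    · exact ⟨Or.inl (c.hB s z hz).1, Or.inl (c.hB s z hz).2⟩
    · constructor
      · exact Or.inr ⟨s * a, (c.hA s a ha).1, b, hb, (mul_assoc s a b).symm⟩
      · exact Or.inr ⟨a, ha, b * s, (c.hA s b hb).2, (mul_assoc a b s)⟩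
  have hBI : c.B ⊆ I := Set.subset_union_left
  have hIA : I ⊆ c.A := by
    rintro z (hz | ⟨a, ha, b, hb, rfl⟩)
    · exact c.hBA hz
    · exact (c.hA a b hb).1
  rcases c.hMx I hIdeal hBI hIA with h | h
  · exfalso
    obtain ⟨x₀, hx₀, y₀, hy₀, hxy⟩ := c.hNN
    have : x₀ * y₀ ∈ I := Or.inr ⟨x₀, hx₀.1, y₀, hy₀.1, rfl⟩
    rw [h] at this; exact hxy this
  · have : y ∈ I := h ▸ hy.1
    rcases this with h' | ⟨a, ha, b, hb, rfl⟩
    · exact absurd h' hy.2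
    · refine ⟨a, ⟨ha, fun haB => hy.2 ?_⟩, b, ⟨hb, fun hbB => hy.2 ?_⟩, rfl⟩
      · exact (c.hB b a haB).2
      · exact (c.hB a b hbB).1

/-- L5: no nonzero element is annihilated by two-sided multiplication. -/
lemma not_annihilated {x : S} (hx : x ∈ c.A \ c.B) : ∃ s t : S, s * x * t ∉ c.B := by
  by_contra hcon
  push_neg at hcon
  set Q : Set S := c.B ∪ {a ∈ c.A | ∀ s t : S, s * a * t ∈ c.B} with hQ
  have hIdeal : IsIdealSet Q := by
    rintro s z (hz | ⟨hzA, hzB⟩)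
    · exact ⟨Or.inl (c.hB s z hz).1, Or.inl (c.hB s z hz).2⟩
    · constructor
      · refine Or.inr ⟨(c.hA s z hzA).1, fun u t => ?_⟩
        have : u * s * z * t ∈ c.B := hzB (u * s) t
        simpa [mul_assoc] using this
      · refine Or.inr ⟨(c.hA s z hzA).2, fun u t => ?_⟩
        have : u * z * (s * t) ∈ c.B := hzB u (s * t)
        simpa [mul_assoc] using this
  have hBQ : c.B ⊆ Q := Set.subset_union_left
  have hQA : Q ⊆ c.A := by rintro z (hz | ⟨hzA, _⟩); exacts [c.hBA hz, hzA]
  rcases c.hMx Q hIdeal hBQ hQA with h | h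
  · have : x ∈ Q := Or.inr ⟨hx.1, hcon⟩
    rw [h] at this; exact hx.2 this
  · obtain ⟨x₀, hx₀, -⟩ := c.hNN
    obtain ⟨a, ha, w, hw, rfl⟩ := c.decomp2 hx₀
    obtain ⟨b₁, hb₁, b₂, hb₂, rfl⟩ := c.decomp2 hw
    have hQb : b₁ ∈ Q := h ▸ hb₁.1
    rcases hQb with h' | ⟨-, h'⟩
    · exact hb₁.2 h'
    · exact hx₀.2 (by simpa [mul_assoc] using h' a b₂)

/-- L6: 0-simplicity. -/
lemma simple {x y : S} (hx : x ∈ c.A \ c.B) (hy : y ∈ c.A \ c.B) :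
    ∃ s t : S, s * x * t = y := by
  set J : Set S := c.B ∪ {z | ∃ s t : S, z = s * x * t} with hJ
  have hIdeal : IsIdealSet J := by
    rintro u z (hz | ⟨s, t, rfl⟩)
    · exact ⟨Or.inl (c.hB u z hz).1, Or.inl (c.hB u z hz).2⟩
    · constructor
      · exact Or.inr ⟨u * s, t, by simp [mul_assoc]⟩
      · exact Or.inr ⟨s, t * u, by simp [mul_assoc]⟩
  have hBJ : c.B ⊆ J := Set.subset_union_left
  have hJA : J ⊆ c.A := by
    rintro z (hz | ⟨s, t, rfl⟩)
    · exact c.hBA hz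
    · exact (c.hA _ _ (c.hA s x hx.1).1).2
  rcases c.hMx J hIdeal hBJ hJA with h | h
  · exfalso
    obtain ⟨s, t, hst⟩ := c.not_annihilated hx
    have : s * x * t ∈ J := Or.inr ⟨s, t, rfl⟩
    rw [h] at this; exact hst this
  · have : y ∈ J := h ▸ hy.1
    rcases this with h' | ⟨s, t, rfl⟩
    · exact absurd h' hy.2
    · exact ⟨s, t, rfl⟩

/-- L7: 0-simplicity with multipliers inside the factor. -/
lemma simpleN {x y : S} (hx : x ∈ c.A \ c.B) (hy : y ∈ c.A \ c.B) :
    ∃ u ∈ c.A \ c.B, ∃ v ∈ c.A \ c.B, u * x * v = y := by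
  obtain ⟨a, ha, w, hw, rfl⟩ := c.decomp2 hy
  obtain ⟨z, hz, d, hd, rfl⟩ := c.decomp2 hw
  obtain ⟨s, t, hst⟩ := c.simple hx hz
  have hprod : a * s * x * (t * d) = a * (z * d) := by
    calc a * s * x * (t * d) = a * (s * x * t) * d := by simp [mul_assoc]
    _ = a * (z * d) := by rw [hst, mul_assoc]
  refine ⟨a * s, ⟨(c.hA s a ha.1).2, fun hB => hy.2 ?_⟩,
    t * d, ⟨(c.hA t d hd.1).1, fun hB => hy.2 ?_⟩, hprod⟩
  · rw [← hprod]; exact (c.hB _ _ (c.hB x _ hB).2).2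
  · rw [← hprod]; exact (c.hB _ _ hB).1

lemma sand_right [Finite S] {x p q : S} (h : x = p * x * q) :
    ∃ n, (sp q n * sp q n = sp q n) ∧ x * sp q n = x := by
  obtain ⟨n, hn⟩ := exists_sp_idem q
  have h1 := sp_sandwich h n
  refine ⟨n, hn, ?_⟩
  calc x * sp q n = sp p n * x * sp q n * sp q n := by rw [← h1]
  _ = sp p n * x * (sp q n * sp q n) := by simp [mul_assoc]
  _ = sp p n * x * sp q n := by rw [hn]
  _ = x := h1.symm

lemma sand_left [Finite S] {x p q : S} (h : x = p * x * q) :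
    ∃ n, (sp p n * sp p n = sp p n) ∧ sp p n * x = x := by
  obtain ⟨n, hn⟩ := exists_sp_idem p
  have h1 := sp_sandwich h n
  refine ⟨n, hn, ?_⟩
  calc sp p n * x = sp p n * (sp p n * x * sp q n) := by rw [← h1]
  _ = sp p n * sp p n * x * sp q n := by simp [mul_assoc]
  _ = sp p n * x * sp q n := by rw [hn]
  _ = x := h1.symm

/-- L8: `sa x` stays in the factor. -/
lemma saN [Finite S] {x : S} (hx : x ∈ c.A \ c.B) : c.sa x ∈ c.A \ c.B := by
  obtain ⟨u, hu, v, hv, huv⟩ := c.simpleN hx hx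
  obtain ⟨n, hidem, hxq⟩ := sand_right huv.symm
  have hsa := (c.sa_absorb hidem hxq).2
  constructor
  · rw [← hsa]; exact (c.hA _ _ (spA c hv.1 n)).1
  · intro hB
    exact hx.2 (by have := (c.hB x _ hB).1; rwa [c.mul_sa] at this)

lemma plN [Finite S] {x : S} (hx : x ∈ c.A \ c.B) : c.pl x ∈ c.A \ c.B := by
  obtain ⟨u, hu, v, hv, huv⟩ := c.simpleN hx hx
  obtain ⟨n, hidem, hxq⟩ := sand_left huv.symm
  have hpl := (c.pl_absorb hidem hxq).1
  constructor
  · rw [← hpl]; exact (c.hA _ _ (spA c hu.1 n)).2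
  · intro hB
    exact hx.2 (by have := (c.hB x _ hB).2; rwa [c.pl_mul] at this)

/-- L11: an idempotent `k` that absorbs `e` on both sides equals `e`. -/
lemma below_eq [Finite S] {k e : S} (hk : k ∈ c.A \ c.B) (he : e ∈ c.A \ c.B)
    (hkk : k * k = k) (hek : e * k = k) (hke : k * e = k) : e = k := by
  obtain ⟨s, t, hst⟩ := c.simple hk he
  have hpq : e = s * e * (k * t) := by
    calc e = s * k * t := hst.symm
    _ = s * (e * k) * t := by rw [hek]
    _ = s * e * (k * t) := by simp [mul_assoc]
  obtain ⟨n, hidem, h2⟩ := sand_right hpq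
  obtain ⟨cc, hcc⟩ := sp_eq_mul_left k t n
  have he2 : e = k * cc := by
    calc e = e * sp (k*t) n := h2.symm
    _ = e * (k * cc) := by rw [hcc]
    _ = (e * k) * cc := by rw [mul_assoc]
    _ = k * cc := by rw [hek]
  have : k * e = e := by
    calc k * e = k * (k * cc) := by rw [← he2]
    _ = (k * k) * cc := by rw [mul_assoc]
    _ = k * cc := by rw [hkk]
    _ = e := he2.symm
  rw [hke] at this; exact this.symm

/-- U: uniqueness of idempotent right identities in the factor. -/
lemma eq_sa [Finite S] {x e : S} (hx : x ∈ c.A \ c.B) (he : e ∈ c.A \ c.B)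
    (hee : e * e = e) (hxe : x * e = x) : e = c.sa x := by
  have habs := c.sa_absorb hee hxe
  exact c.below_eq (c.saN hx) he (c.sa_idem x) habs.1 habs.2

lemma eq_pl [Finite S] {x e : S} (hx : x ∈ c.A \ c.B) (he : e ∈ c.A \ c.B)
    (hee : e * e = e) (hex : e * x = x) : e = c.pl x := by
  have habs := c.pl_absorb hee hex
  exact c.below_eq (c.plN hx) he (c.pl_idem x) habs.1 habs.2

/-- L12: regularity. -/
lemma regular [Finite S] {x : S} (hx : x ∈ c.A \ c.B) : ∃ y : S, x * y * x = x := by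
  obtain ⟨u, hu, v, hv, huv⟩ := c.simpleN hx (c.saN hx)
  have h : x = (x * u) * x * v := by
    calc x = x * c.sa x := (c.mul_sa x).symm
    _ = x * (u * x * v) := by rw [huv]
    _ = (x * u) * x * v := by simp [mul_assoc]
  obtain ⟨m, hidem, h2⟩ := sand_left h
  obtain ⟨cc, hcc⟩ := sp_eq_mul_left x u m
  exact ⟨cc, by rw [← hcc]; exact h2⟩

/-- INV: each element of the factor has an inverse matching `pl` and `sa`. -/
lemma inv [Finite S] {x : S} (hx : x ∈ c.A \ c.B) :
    ∃ x' ∈ c.A \ c.B, x * x' = c.pl x ∧ x' * x = c.sa x ∧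
      c.pl x' = c.sa x ∧ c.sa x' = c.pl x := by
  obtain ⟨y, hy⟩ := c.regular hx
  have hyx3 : x * (y * x) = x := by rw [← mul_assoc]; exact hy
  have hpA : x * y ∈ c.A := (c.hA y x hx.1).2
  have hpB : x * y ∉ c.B := fun hB => hx.2 (by have := (c.hB x _ hB).2; rwa [hy] at this)
  have hpidem : (x * y) * (x * y) = x * y := by
    calc (x*y) * (x*y) = (x * y * x) * y := by simp [mul_assoc]
    _ = x * y := by rw [hy]
  have hplx : c.pl x = x * y := (c.eq_pl hx ⟨hpA, hpB⟩ hpidem hy).symm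
  have hfA : y * x ∈ c.A := (c.hA y x hx.1).1
  have hfB : y * x ∉ c.B := fun hB => hx.2 (by have := (c.hB x _ hB).1; rwa [hyx3] at this)
  have hfidem : (y * x) * (y * x) = y * x := by
    calc (y*x) * (y*x) = y * (x * y * x) := by simp [mul_assoc]
    _ = y * x := by rw [hy]
  have hsax : c.sa x = y * x := (c.eq_sa hx ⟨hfA, hfB⟩ hfidem hyx3).symm
  refine ⟨y * x * y, ⟨(c.hA _ _ hfA).2, ?_⟩, ?_, ?_, ?_, ?_⟩
  · intro hB
    have : x * (y * x * y) ∈ c.B := (c.hB x _ hB).1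
    have heq : x * (y * x * y) = x * y := by
      calc x * (y * x * y) = (x * y * x) * y := by simp [mul_assoc]
      _ = x * y := by rw [hy]
    rw [heq] at this; exact hpB this
  · rw [hplx]
    calc x * (y * x * y) = (x * y * x) * y := by simp [mul_assoc]
    _ = x * y := by rw [hy]
  · rw [hsax]
    calc (y * x * y) * x = (y * x) * (y * x) := by simp [mul_assoc]
    _ = y * x := hfidem
  · refine (c.eq_pl ?_ ?_ ?_ ?_).symm
    · constructor
      · exact (c.hA _ _ hfA).2
      · intro hB
        have : x * (y * x * y) ∈ c.B := (c.hB x _ hB).1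
        have heq : x * (y * x * y) = x * y := by
          calc x * (y * x * y) = (x * y * x) * y := by simp [mul_assoc]
          _ = x * y := by rw [hy]
        rw [heq] at this; exact hpB this
    · rw [hsax]; exact ⟨hfA, hfB⟩
    · rw [hsax]; exact hfidem
    · rw [hsax]
      calc (y * x) * (y * x * y) = ((y*x) * (y*x)) * y := by simp [mul_assoc]
      _ = (y * x) * y := by rw [hfidem]
  · refine (c.eq_sa ?_ ?_ ?_ ?_).symm
    · constructor
      · exact (c.hA _ _ hfA).2
      · intro hB
        have : x * (y * x * y) ∈ c.B := (c.hB x _ hB).1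
        have heq : x * (y * x * y) = x * y := by
          calc x * (y * x * y) = (x * y * x) * y := by simp [mul_assoc]
          _ = x * y := by rw [hy]
        rw [heq] at this; exact hpB this
    · rw [hplx]; exact ⟨hpA, hpB⟩
    · rw [hplx]; exact hpidem
    · rw [hplx]
      calc (y * x * y) * (x * y) = ((y*x) * (y*x)) * y := by simp [mul_assoc]
      _ = (y * x) * y := by rw [hfidem]

/-- L14 (⇐). -/
lemma mul_notB_of_eq [Finite S] {x y : S} (hx : x ∈ c.A \ c.B) (hy : y ∈ c.A \ c.B)
    (h : c.sa x = c.pl y) : x * y ∉ c.B := by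
  obtain ⟨x', hx', hxx', hx'x, -, -⟩ := c.inv hx
  intro hB
  have : y = x' * (x * y) := by
    calc y = c.pl y * y := (c.pl_mul y).symm
    _ = (x' * x) * y := by rw [← h, ← hx'x]
    _ = x' * (x * y) := mul_assoc _ _ _
  exact hy.2 (this ▸ (c.hB x' _ hB).1)

/-- L14 (⇒): the Brandt dichotomy. -/
lemma eq_of_mul_notB [Finite S] {x y : S} (hx : x ∈ c.A \ c.B) (hy : y ∈ c.A \ c.B)
    (h : x * y ∉ c.B) : c.sa x = c.pl y := by
  set m := c.sa x with hm
  set p := c.pl y with hp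
  have hmN : m ∈ c.A \ c.B := c.saN hx
  have hpN : p ∈ c.A \ c.B := c.plN hy
  have hweq : (x * (m * p)) * y = x * y := by
    calc (x * (m * p)) * y = ((x * m) * p) * y := by simp [mul_assoc]
    _ = (x * p) * y := by rw [c.mul_sa]
    _ = x * (p * y) := by rw [mul_assoc]
    _ = x * y := by rw [c.pl_mul]
  have hwB : m * p ∉ c.B := by
    intro hB
    exact h (hweq ▸ (c.hB y _ (c.hB x _ hB).1).2)
  have hwA : m * p ∈ c.A := (c.hA m p hpN.1).1
  have hplw : c.pl (m * p) = m := by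
    refine (c.eq_pl ⟨hwA, hwB⟩ hmN (c.sa_idem x) ?_).symm
    calc m * (m * p) = (m * m) * p := (mul_assoc _ _ _).symm
    _ = m * p := by rw [c.sa_idem]
  have hsaw : c.sa (m * p) = p := by
    refine (c.eq_sa ⟨hwA, hwB⟩ hpN (c.pl_idem y) ?_).symm
    calc (m * p) * p = m * (p * p) := mul_assoc _ _ _
    _ = m * p := by rw [c.pl_idem]
  obtain ⟨w', hw', hww', hw'w, hplw', hsaw'⟩ := c.inv ⟨hwA, hwB⟩
  have hpw' : p * w' = w' := by
    have := c.pl_mul w'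
    rwa [hplw', hsaw] at this
  have hm2 : (m * p) * w' = m := by rw [hww', hplw]
  have h1 : m * w' = m := by
    calc m * w' = (m * p) * w' := by rw [mul_assoc, hpw']
    _ = m := hm2
  obtain ⟨n, hidem⟩ := exists_sp_idem w'
  have hE : sp w' n = m := by
    have hnotB : sp w' n ∉ c.B := by
      intro hB
      exact hmN.2 (by have := (c.hB m _ hB).1; rwa [sp_right_id h1 n] at this)
    have := c.eq_sa hmN ⟨spA c hw'.1 n, hnotB⟩ hidem (sp_right_id h1 n)
    rwa [c.sa_of_idem (c.sa_idem x)] at this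
  have h3 : p * m = m := by
    have := sp_left_absorb hpw' n
    rwa [hE] at this
  have h4 : m * p = m := c.law₁ (c.pl_idem y) (c.sa_idem x) h3
  have h5 := hsaw
  rw [h4, c.sa_of_idem (c.sa_idem x)] at h5
  exact h5

/-- L16. -/
lemma pl_mul_eq [Finite S] {x y : S} (hx : x ∈ c.A \ c.B) (hy : y ∈ c.A \ c.B)
    (h : x * y ∉ c.B) : c.pl (x * y) = c.pl x := by
  refine (c.eq_pl ⟨(c.hA y x hx.1).2, h⟩ (c.plN hx) (c.pl_idem x) ?_).symm
  rw [← mul_assoc, c.pl_mul]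

lemma sa_mul_eq [Finite S] {x y : S} (hx : x ∈ c.A \ c.B) (hy : y ∈ c.A \ c.B)
    (h : x * y ∉ c.B) : c.sa (x * y) = c.sa y := by
  refine (c.eq_sa ⟨(c.hA y x hx.1).2, h⟩ (c.saN hy) (c.sa_idem y) ?_).symm
  rw [mul_assoc, c.mul_sa]

/-- L17: transitivity on idempotents. -/
lemma trans_idem [Finite S] {e f : S} (he : e ∈ c.A \ c.B) (hf : f ∈ c.A \ c.B)
    (hee : e * e = e) (hff : f * f = f) :
    ∃ r ∈ c.A \ c.B, c.pl r = e ∧ c.sa r = f := by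
  obtain ⟨u, hu, v, hv, huv⟩ := c.simpleN he hf
  have hur : u * (e * v * f) = f := by
    calc u * (e * v * f) = (u * e * v) * f := by simp [mul_assoc]
    _ = f := by rw [huv, hff]
  have hrA : e * v * f ∈ c.A := (c.hA f _ (c.hA v e he.1).2).2
  have hrB : e * v * f ∉ c.B := fun hB => hf.2 (hur ▸ (c.hB u _ hB).1)
  refine ⟨e * v * f, ⟨hrA, hrB⟩, ?_, ?_⟩
  · refine (c.eq_pl ⟨hrA, hrB⟩ he hee ?_).symm
    calc e * (e * v * f) = ((e * e) * v) * f := by simp [mul_assoc]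
    _ = e * v * f := by rw [hee]
  · refine (c.eq_sa ⟨hrA, hrB⟩ hf hff ?_).symm
    calc (e * v * f) * f = (e * v) * (f * f) := by simp [mul_assoc]
    _ = e * v * f := by rw [hff]

/-- L-mul3: well-formed triple products in the factor. -/
lemma mul3N [Finite S] {a b d : S} (ha : a ∈ c.A \ c.B) (hb : b ∈ c.A \ c.B)
    (hd : d ∈ c.A \ c.B) (h1 : c.sa a = c.pl b) (h2 : c.sa b = c.pl d) :
    (a * b * d ∈ c.A \ c.B) ∧ c.pl (a * b * d) = c.pl a ∧ c.sa (a * b * d) = c.sa d := by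
  have hab : a * b ∉ c.B := c.mul_notB_of_eq ha hb h1
  have habN : a * b ∈ c.A \ c.B := ⟨(c.hA b a ha.1).2, hab⟩
  have h3 : c.sa (a * b) = c.pl d := by rw [c.sa_mul_eq ha hb hab, h2]
  have habd : (a * b) * d ∉ c.B := c.mul_notB_of_eq habN hd h3
  refine ⟨⟨(c.hA d _ habN.1).2, habd⟩, ?_, ?_⟩
  · rw [c.pl_mul_eq habN hd habd, c.pl_mul_eq ha hb hab]
  · rw [c.sa_mul_eq habN hd habd]

variable (e₀ : S)

/-- The maximal subgroup at the idempotent `e₀`. -/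
abbrev Hsub : Type _ := {g : S // g ∈ c.A \ c.B ∧ c.pl g = e₀ ∧ c.sa g = e₀}

noncomputable def hMul [Finite S] (h1 : e₀ ∈ c.A \ c.B) (h2 : e₀ * e₀ = e₀) :
    Mul (c.Hsub e₀) := by
  refine ⟨fun g h => ⟨g.1 * h.1, ⟨(c.hA h.1 g.1 g.2.1.1).2, ?_⟩, ?_, ?_⟩⟩
  · exact c.mul_notB_of_eq g.2.1 h.2.1 (by rw [g.2.2.2, h.2.2.1])
  · rw [c.pl_mul_eq g.2.1 h.2.1
      (c.mul_notB_of_eq g.2.1 h.2.1 (by rw [g.2.2.2, h.2.2.1])), g.2.2.1]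
  · rw [c.sa_mul_eq g.2.1 h.2.1
      (c.mul_notB_of_eq g.2.1 h.2.1 (by rw [g.2.2.2, h.2.2.1])), h.2.2.2]

noncomputable def hGroup [Finite S] (h1 : e₀ ∈ c.A \ c.B) (h2 : e₀ * e₀ = e₀) :
    Group (c.Hsub e₀) := by
  letI : Mul (c.Hsub e₀) := c.hMul e₀ h1 h2
  letI : One (c.Hsub e₀) := ⟨⟨e₀, h1, c.pl_of_idem h2, c.sa_of_idem h2⟩⟩
  have hinv : ∀ g : c.Hsub e₀, ∃ g' : c.Hsub e₀, g'.1 * g.1 = e₀ := by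
    intro g
    obtain ⟨g', hg', hgg', hg'g, hplg', hsag'⟩ := c.inv g.2.1
    refine ⟨⟨g', hg', by rw [hplg', g.2.2.2], by rw [hsag', g.2.2.1]⟩, ?_⟩
    rw [hg'g, g.2.2.2]
  letI : Inv (c.Hsub e₀) := ⟨fun g => Classical.choose (hinv g)⟩
  refine Group.ofLeftAxioms (fun a b d => Subtype.ext (mul_assoc a.1 b.1 d.1))
    (fun a => Subtype.ext ?_) (fun a => Subtype.ext (Classical.choose_spec (hinv a)))
  show e₀ * a.1 = a.1
  have := c.pl_mul a.1
  rwa [a.2.2.1] at this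

end Ctx
end SR

open SR in
/-- In a finite singleton-rich semigroup with a principal series
`S = A 0 ⊋ A 1 ⊋ ⋯ ⊋ A l ⊋ A (l+1) = ∅`, every non-null principal factor `A i / A (i+1)`
is isomorphic (as a multiplicative structure) to a Brandt semigroup `ℬₙ(G)` over a finite
group `G`; in particular it is an inverse completely 0-simple semigroup or a group. -/
theorem stmt11 {S : Type*} [Semigroup S] [Fintype S] (sa pl : S → S)
    (hsa : ∀ s : S, IsKer (Subsemigroup.closure (rIds s)) (sa s))
    (hpl : ∀ s : S, IsKer (Subsemigroup.closure (lIds s)) (pl s))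
    (l : ℕ) (A : ℕ → Set S)
    (hA0 : A 0 = Set.univ) (hAtop : A (l + 1) = ∅)
    (hIdeal : ∀ i ≤ l + 1, IsIdealSet (A i))
    (hChain : ∀ i ≤ l, A (i + 1) ⊂ A i)
    (hMax : ∀ i ≤ l, ∀ I : Set S, IsIdealSet I → A (i + 1) ⊆ I → I ⊆ A i →
      I = A (i + 1) ∨ I = A i)
    (i : ℕ) (hi : i ≤ l)
    (hNotNull : ∃ x ∈ A i \ A (i + 1), ∃ y ∈ A i \ A (i + 1), x * y ∉ A (i + 1)) :
    ∃ (n : ℕ) (G : Type) (_ : Group G) (_ : Fintype G)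
      (e : Option {x : S // x ∈ A i \ A (i + 1)} ≃ Option (Fin n × G × Fin n)),
      ∀ x y, e (facMul (A i) (A (i + 1)) x y) = brandtMul (e x) (e y) := by
  classical
  set c : SR.Ctx S := SR.Ctx.mk sa pl hsa hpl (A i) (A (i+1))
    (hIdeal i (by omega)) (hIdeal (i+1) (by omega))
    (hChain i hi).subset (hMax i hi) hNotNull with hcdef
  obtain ⟨x₀, hx₀, -⟩ := c.hNN
  have hx₀' : x₀ ∈ c.A \ c.B := hx₀
  -- the set of nonzero idempotents
  let Etype : Type _ := {e : S // e ∈ c.A \ c.B ∧ e * e = e}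
  haveI : Fintype Etype := Fintype.ofFinite _
  let eqE : Etype ≃ Fin (Fintype.card Etype) := Fintype.equivFin Etype
  let e₀ : Etype := ⟨c.sa x₀, c.saN hx₀', c.sa_idem x₀⟩
  -- the maximal subgroup at e₀
  let H := c.Hsub e₀.1
  letI grpH : Group H := c.hGroup e₀.1 e₀.2.1 e₀.2.2
  haveI : Fintype H := Fintype.ofFinite _
  let gE : H ≃ GCarrier (Fintype.card H) :=
    (Fintype.equivFin H).trans (Equiv.cast (show Fin _ = GCarrier _ from rfl))
  letI grpG : Group (GCarrier (Fintype.card H)) := Equiv.group gE.symm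
  haveI finG : Fintype (GCarrier (Fintype.card H)) :=
    Fintype.ofEquiv _ (Equiv.cast (show Fin _ = GCarrier _ from rfl))
  have hgE : ∀ a b : H, gE (a * b) = gE a * gE b := by
    intro a b
    show gE (a * b) = gE (gE.symm (gE a) * gE.symm (gE b))
    rw [Equiv.symm_apply_apply, Equiv.symm_apply_apply]
  have hHmul : ∀ a b : H, (a * b).1 = a.1 * b.1 := fun a b => rfl
  -- the transversal
  have hR : ∀ e : Etype, ∃ r r' : S, (r ∈ c.A \ c.B) ∧ (r' ∈ c.A \ c.B) ∧
      c.pl r = e.1 ∧ c.sa r = e₀.1 ∧ c.pl r' = e₀.1 ∧ c.sa r' = e.1 ∧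
      r * r' = e.1 ∧ r' * r = e₀.1 := by
    intro e
    obtain ⟨r, hr, hplr, hsar⟩ := c.trans_idem e.2.1 e₀.2.1 e.2.2 e₀.2.2
    obtain ⟨r', hr', hrr', hr'r, hplr', hsar'⟩ := c.inv hr
    exact ⟨r, r', hr, hr', hplr, hsar, by rw [hplr', hsar], by rw [hsar', hplr],
      by rw [hrr', hplr], by rw [hr'r, hsar]⟩
  choose R R' hRN hR'N hplR hsaR hplR' hsaR' hRR' hR'R using hR
  -- projections to Etype
  have memc : ∀ x : {x : S // x ∈ A i \ A (i+1)}, x.1 ∈ c.A \ c.B := fun x => x.2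
  let plE : {x : S // x ∈ A i \ A (i+1)} → Etype :=
    fun x => ⟨c.pl x.1, c.plN (memc x), c.pl_idem x.1⟩
  let saE : {x : S // x ∈ A i \ A (i+1)} → Etype :=
    fun x => ⟨c.sa x.1, c.saN (memc x), c.sa_idem x.1⟩
  -- the middle coordinate
  have hmid : ∀ x : {x : S // x ∈ A i \ A (i+1)},
      (R' (plE x) * x.1 * R (saE x)) ∈ c.A \ c.B ∧
      c.pl (R' (plE x) * x.1 * R (saE x)) = e₀.1 ∧
      c.sa (R' (plE x) * x.1 * R (saE x)) = e₀.1 := by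
    intro x
    have h3 := c.mul3N (hR'N (plE x)) (memc x) (hRN (saE x))
      (by rw [hsaR' (plE x)]) (by rw [hplR (saE x)])
    exact ⟨h3.1, by rw [h3.2.1, hplR' (plE x)], by rw [h3.2.2, hsaR (saE x)]⟩
  let mid : {x : S // x ∈ A i \ A (i+1)} → H :=
    fun x => ⟨R' (plE x) * x.1 * R (saE x), (hmid x).1, (hmid x).2.1, (hmid x).2.2⟩
  -- the inverse map data
  have hpsi : ∀ (j k : Fin (Fintype.card Etype)) (h : H),
      (R (eqE.symm j) * h.1 * R' (eqE.symm k)) ∈ c.A \ c.B ∧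
      c.pl (R (eqE.symm j) * h.1 * R' (eqE.symm k)) = (eqE.symm j).1 ∧
      c.sa (R (eqE.symm j) * h.1 * R' (eqE.symm k)) = (eqE.symm k).1 := by
    intro j k h
    have h3 := c.mul3N (hRN (eqE.symm j)) h.2.1 (hR'N (eqE.symm k))
      (by rw [hsaR (eqE.symm j), h.2.2.1]) (by rw [hplR' (eqE.symm k), h.2.2.2])
    exact ⟨h3.1, by rw [h3.2.1, hplR (eqE.symm j)], by rw [h3.2.2, hsaR' (eqE.symm k)]⟩
  -- the bijection on nonzero elements
  let smallE : {x : S // x ∈ A i \ A (i+1)} ≃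
      (Fin (Fintype.card Etype) × GCarrier (Fintype.card H) × Fin (Fintype.card Etype)) :=
    { toFun := fun x => (eqE (plE x), gE (mid x), eqE (saE x))
      invFun := fun p => ⟨R (eqE.symm p.1) * (gE.symm p.2.1).1 * R' (eqE.symm p.2.2),
        (hpsi p.1 p.2.2 (gE.symm p.2.1)).1⟩
      left_inv := by
        intro x
        apply Subtype.ext
        show R (eqE.symm (eqE (plE x))) * (gE.symm (gE (mid x))).1 *
          R' (eqE.symm (eqE (saE x))) = x.1
        rw [Equiv.symm_apply_apply, Equiv.symm_apply_apply, Equiv.symm_apply_apply]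
        show R (plE x) * (R' (plE x) * x.1 * R (saE x)) * R' (saE x) = x.1
        calc R (plE x) * (R' (plE x) * x.1 * R (saE x)) * R' (saE x)
            = (R (plE x) * R' (plE x)) * x.1 * (R (saE x) * R' (saE x)) := by
              simp [mul_assoc]
        _ = c.pl x.1 * x.1 * c.sa x.1 := by rw [hRR' (plE x), hRR' (saE x)]
        _ = x.1 := by rw [c.pl_mul, c.mul_sa]
      right_inv := by
        intro p
        obtain ⟨j, g, k⟩ := p
        have hv := hpsi j k (gE.symm g)
        set v : {x : S // x ∈ A i \ A (i+1)} :=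
          ⟨R (eqE.symm j) * (gE.symm g).1 * R' (eqE.symm k), hv.1⟩ with hvdef
        have h1 : plE v = eqE.symm j := Subtype.ext hv.2.1
        have h2 : saE v = eqE.symm k := Subtype.ext hv.2.2
        have h3 : mid v = gE.symm g := by
          apply Subtype.ext
          show R' (plE v) * v.1 * R (saE v) = (gE.symm g).1
          rw [h1, h2]
          calc R' (eqE.symm j) * (R (eqE.symm j) * (gE.symm g).1 * R' (eqE.symm k)) *
              R (eqE.symm k)
              = (R' (eqE.symm j) * R (eqE.symm j)) * (gE.symm g).1 *
                (R' (eqE.symm k) * R (eqE.symm k)) := by simp [mul_assoc]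
          _ = e₀.1 * (gE.symm g).1 * e₀.1 := by rw [hR'R, hR'R]
          _ = (gE.symm g).1 := by
              have ha : e₀.1 * (gE.symm g).1 = (gE.symm g).1 := by
                have := c.pl_mul (gE.symm g).1
                rwa [(gE.symm g).2.2.1] at this
              have hb : (gE.symm g).1 * e₀.1 = (gE.symm g).1 := by
                have := c.mul_sa (gE.symm g).1
                rwa [(gE.symm g).2.2.2] at this
              rw [ha, hb]
        show (eqE (plE v), gE (mid v), eqE (saE v)) = (j, g, k)
        rw [h1, h2, h3, Equiv.apply_symm_apply, Equiv.apply_symm_apply,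
          Equiv.apply_symm_apply] }
  refine ⟨Fintype.card Etype, GCarrier (Fintype.card H), grpG, finG,
    Equiv.optionCongr smallE, ?_⟩
  intro x y
  match x, y with
  | none, none => rfl
  | none, some b => rfl
  | some a, none => rfl
  | some a, some b =>
    show Equiv.optionCongr smallE (facMul (A i) (A (i+1)) (some a) (some b)) =
      brandtMul (some (smallE a)) (some (smallE b))
    by_cases hab : a.1 * b.1 ∈ A i \ A (i+1)
    · rw [show facMul (A i) (A (i+1)) (some a) (some b) = some ⟨a.1 * b.1, hab⟩ from
        dif_pos hab]
      have habB : a.1 * b.1 ∉ c.B := hab.2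
      have hsp : c.sa a.1 = c.pl b.1 := c.eq_of_mul_notB (memc a) (memc b) habB
      have hEsp : saE a = plE b := Subtype.ext hsp
      show some (smallE ⟨a.1 * b.1, hab⟩) =
        brandtMul (some (eqE (plE a), gE (mid a), eqE (saE a)))
          (some (eqE (plE b), gE (mid b), eqE (saE b)))
      rw [show brandtMul (some (eqE (plE a), gE (mid a), eqE (saE a)))
          (some (eqE (plE b), gE (mid b), eqE (saE b))) =
          if eqE (saE a) = eqE (plE b) then
            some (eqE (plE a), gE (mid a) * gE (mid b), eqE (saE b)) else none from rfl,
        if_pos (by rw [hEsp])]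
      have hab' : (⟨a.1 * b.1, hab⟩ : {x : S // x ∈ A i \ A (i+1)}).1 = a.1 * b.1 := rfl
      have hplab : plE ⟨a.1 * b.1, hab⟩ = plE a :=
        Subtype.ext (c.pl_mul_eq (memc a) (memc b) habB)
      have hsaab : saE ⟨a.1 * b.1, hab⟩ = saE b :=
        Subtype.ext (c.sa_mul_eq (memc a) (memc b) habB)
      have hmidab : mid ⟨a.1 * b.1, hab⟩ = mid a * mid b := by
        apply Subtype.ext
        rw [hHmul]
        show R' (plE ⟨a.1 * b.1, hab⟩) * (a.1 * b.1) * R (saE ⟨a.1 * b.1, hab⟩) =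
          (R' (plE a) * a.1 * R (saE a)) * (R' (plE b) * b.1 * R (saE b))
        rw [hplab, hsaab, hEsp]
        calc R' (plE a) * (a.1 * b.1) * R (saE b)
            = R' (plE a) * (a.1 * (c.sa a.1 * b.1)) * R (saE b) := by
              rw [show c.sa a.1 * b.1 = b.1 from by
                have := c.pl_mul b.1; rwa [← hsp] at this]
        _ = R' (plE a) * (a.1 * (((R (plE b)) * R' (plE b)) * b.1)) * R (saE b) := by
              rw [hRR' (plE b), ← hEsp]
        _ = (R' (plE a) * a.1 * R (plE b)) * (R' (plE b) * b.1 * R (saE b)) := by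
              simp [mul_assoc]
      show some (eqE (plE ⟨a.1 * b.1, hab⟩), gE (mid ⟨a.1 * b.1, hab⟩),
        eqE (saE ⟨a.1 * b.1, hab⟩)) = _
      rw [hplab, hsaab, hmidab, hgE]
    · rw [show facMul (A i) (A (i+1)) (some a) (some b) = none from dif_neg hab]
      show none = brandtMul (some (eqE (plE a), gE (mid a), eqE (saE a)))
        (some (eqE (plE b), gE (mid b), eqE (saE b)))
      rw [show brandtMul (some (eqE (plE a), gE (mid a), eqE (saE a)))
          (some (eqE (plE b), gE (mid b), eqE (saE b))) =
          if eqE (saE a) = eqE (plE b) then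
            some (eqE (plE a), gE (mid a) * gE (mid b), eqE (saE b)) else none from rfl,
        if_neg ?_]
      intro hcon
      have : saE a = plE b := eqE.injective hcon
      have hsp : c.sa a.1 = c.pl b.1 := congrArg Subtype.val this
      exact hab ⟨(c.hA b.1 a.1 (memc a).1).2, c.mul_notB_of_eq (memc a) (memc b) hsp⟩
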